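/- Let q be an indecomposable pattern. Then for all positive integers m and n, u_m(q)·u_n(q) ≤ u_{m+n}(q), where u_n(q) is the number of q-avoiding permutations of length n with a unique longest increasing subsequence. Concretely, if p is a q-avoiding permutation of length m with a ULIS and r is a q-avoiding permutation of length n with a ULIS, then the direct sum p ⊕ r (the permutation of length m+n acting as p on {1,…,m} and as a shifted copy of r on {m+1,…,m+n}) is q-avoiding and has a ULIS. -/

import Mathlib

/-- `s` is the index set of an increasing subsequence of the word `f`. -/
def IsIncSubseq {n : ℕ} {α : Type*} [Preorder α] (f : Fin n → α) (s : Finset (Fin n)) : Prop :=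
  ∀ i ∈ s, ∀ j ∈ s, i < j → f i < f j

/-- `f` has a unique longest increasing subsequence. -/
def HasULIS {n : ℕ} {α : Type*} [Preorder α] (f : Fin n → α) : Prop :=
  ∃! s : Finset (Fin n), IsIncSubseq f s ∧
    ∀ t : Finset (Fin n), IsIncSubseq f t → t.card ≤ s.card

/-- `p` contains the pattern `q`. -/
def Contains {k n : ℕ} (q : Equiv.Perm (Fin k)) (p : Equiv.Perm (Fin n)) : Prop :=
  ∃ f : Fin k → Fin n, StrictMono f ∧ ∀ a b : Fin k, p (f a) < p (f b) ↔ q a < q b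

/-- `p` avoids the pattern `q`. -/
def Avoids {k n : ℕ} (q : Equiv.Perm (Fin k)) (p : Equiv.Perm (Fin n)) : Prop :=
  ¬ Contains q p

def pattern321 : Equiv.Perm (Fin 3) := ⟨![2,1,0], ![2,1,0], by decide, by decide⟩
def pattern231 : Equiv.Perm (Fin 3) := ⟨![1,2,0], ![2,0,1], by decide, by decide⟩
def pattern132 : Equiv.Perm (Fin 3) := ⟨![0,2,1], ![0,2,1], by decide, by decide⟩
def pattern123 : Equiv.Perm (Fin 3) := Equiv.refl (Fin 3)

/-- the number of `q`-avoiding permutations of length `n` with a unique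
longest increasing subsequence. -/
noncomputable def uNum {k : ℕ} (q : Equiv.Perm (Fin k)) (n : ℕ) : ℕ :=
  Nat.card {p : Equiv.Perm (Fin n) // Avoids q p ∧ HasULIS ⇑p}

/-- the number of `q`-avoiding involutions of length `n` with a unique
longest increasing subsequence. -/
noncomputable def iNum {k : ℕ} (q : Equiv.Perm (Fin k)) (n : ℕ) : ℕ :=
  Nat.card {p : Equiv.Perm (Fin n) // p⁻¹ = p ∧ Avoids q p ∧ HasULIS ⇑p}

/-- A permutation is indecomposable if it cannot be cut into a (nonempty) prefix and
a (nonempty) suffix so that every entry of the prefix is smaller than every entry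
of the suffix. -/
def Indecomposable {m : ℕ} (w : Equiv.Perm (Fin m)) : Prop :=
  ¬ ∃ j : ℕ, 1 ≤ j ∧ j < m ∧ ∀ a b : Fin m, (a : ℕ) < j → j ≤ (b : ℕ) → w a < w b

/-- The direct sum `p ⊕ r`: acts as `p` on the first `m` positions and as a shifted
copy of `r` on the last `n` positions. -/
def directSum {m n : ℕ} (p : Equiv.Perm (Fin m)) (r : Equiv.Perm (Fin n)) :
    Equiv.Perm (Fin (m + n)) :=
  (finSumFinEquiv.symm.trans (Equiv.sumCongr p r)).trans finSumFinEquiv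

namespace ULISAux

variable {m n : ℕ}

lemma ca_lt_ca {i j : Fin m} : Fin.castAdd n i < Fin.castAdd n j ↔ i < j := by
  rw [Fin.lt_def, Fin.lt_def, Fin.coe_castAdd, Fin.coe_castAdd]

lemma na_lt_na {i j : Fin n} : Fin.natAdd m i < Fin.natAdd m j ↔ i < j := by
  rw [Fin.lt_def, Fin.lt_def, Fin.coe_natAdd, Fin.coe_natAdd]; omega

lemma ca_lt_na (i : Fin m) (j : Fin n) : Fin.castAdd n i < Fin.natAdd m j := by
  rw [Fin.lt_def, Fin.coe_castAdd, Fin.coe_natAdd]; have := i.isLt; omega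

def e1 : Fin m ↪ Fin (m + n) :=
  ⟨Fin.castAdd n, Fin.castAdd_injective m n⟩

def e2 : Fin n ↪ Fin (m + n) :=
  ⟨Fin.natAdd m, Fin.natAdd_injective n m⟩

lemma ds_castAdd (p : Equiv.Perm (Fin m)) (r : Equiv.Perm (Fin n)) (i : Fin m) :
    directSum p r (Fin.castAdd n i) = Fin.castAdd n (p i) := by simp [directSum]

lemma ds_natAdd (p : Equiv.Perm (Fin m)) (r : Equiv.Perm (Fin n)) (j : Fin n) :
    directSum p r (Fin.natAdd m j) = Fin.natAdd m (r j) := by simp [directSum]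

def pt1 (W : Finset (Fin (m + n))) : Finset (Fin m) :=
  Finset.univ.filter (fun i => Fin.castAdd n i ∈ W)

def pt2 (W : Finset (Fin (m + n))) : Finset (Fin n) :=
  Finset.univ.filter (fun j => Fin.natAdd m j ∈ W)

lemma W_eq (W : Finset (Fin (m + n))) :
    W = (pt1 W).map e1 ∪ (pt2 W).map e2 := by
  ext x
  simp only [Finset.mem_union, Finset.mem_map, pt1, pt2, Finset.mem_filter,
    Finset.mem_univ, true_and, e1, e2, Function.Embedding.coeFn_mk]
  constructor
  · intro hx
    rcases lt_or_ge (x : ℕ) m with h | h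
    · exact Or.inl ⟨⟨x, h⟩, by simpa [Fin.ext_iff] using hx, Fin.ext rfl⟩
    · refine Or.inr ⟨⟨(x : ℕ) - m, by have := x.isLt; omega⟩, ?_, Fin.ext (by simp [Fin.coe_natAdd]; omega)⟩
      convert hx using 2
      exact Fin.ext (by simp [Fin.coe_natAdd]; omega)
  · rintro (⟨i, hi, rfl⟩ | ⟨j, hj, rfl⟩) <;> assumption

lemma union_card (S : Finset (Fin m)) (T : Finset (Fin n)) :
    (S.map e1 ∪ T.map e2).card = S.card + T.card := by
  rw [Finset.card_union_of_disjoint, Finset.card_map, Finset.card_map]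
  rw [Finset.disjoint_left]
  rintro a ha hb
  simp only [Finset.mem_map, e1, e2, Function.Embedding.coeFn_mk] at ha hb
  obtain ⟨i, -, rfl⟩ := ha
  obtain ⟨j, -, hj⟩ := hb
  have := congrArg Fin.val hj
  simp only [Fin.coe_castAdd, Fin.coe_natAdd] at this
  have := i.isLt
  omega

lemma pt1_map (S : Finset (Fin m)) (T : Finset (Fin n)) :
    pt1 (S.map e1 ∪ T.map e2) = S := by
  ext i
  simp only [pt1, Finset.mem_filter, Finset.mem_univ, true_and, Finset.mem_union,
    Finset.mem_map, e1, e2, Function.Embedding.coeFn_mk]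
  constructor
  · rintro (⟨i', hi', h⟩ | ⟨j, hj, h⟩)
    · have := congrArg Fin.val h
      simp only [Fin.coe_castAdd] at this
      rwa [show i = i' from Fin.ext this.symm]
    · have := congrArg Fin.val h
      simp only [Fin.coe_castAdd, Fin.coe_natAdd] at this
      have := i.isLt; omega
  · intro h; exact Or.inl ⟨i, h, rfl⟩

lemma pt2_map (S : Finset (Fin m)) (T : Finset (Fin n)) :
    pt2 (S.map e1 ∪ T.map e2) = T := by
  ext j
  simp only [pt2, Finset.mem_filter, Finset.mem_univ, true_and, Finset.mem_union,
    Finset.mem_map, e1, e2, Function.Embedding.coeFn_mk]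
  constructor
  · rintro (⟨i, hi, h⟩ | ⟨j', hj', h⟩)
    · have := congrArg Fin.val h
      simp only [Fin.coe_castAdd, Fin.coe_natAdd] at this
      have := i.isLt; omega
    · have := congrArg Fin.val h
      simp only [Fin.coe_natAdd] at this
      have : j = j' := Fin.ext (by omega)
      rwa [this]
  · intro h; exact Or.inr ⟨j, h, rfl⟩

variable (p : Equiv.Perm (Fin m)) (r : Equiv.Perm (Fin n))

lemma inc_pt1 {W : Finset (Fin (m + n))} (hW : IsIncSubseq (⇑(directSum p r)) W) :
    IsIncSubseq (⇑p) (pt1 W) := by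
  intro i hi j hj hij
  simp only [pt1, Finset.mem_filter] at hi hj
  have := hW _ hi.2 _ hj.2 (ca_lt_ca.mpr hij)
  rw [ds_castAdd, ds_castAdd] at this
  exact ca_lt_ca.mp this

lemma inc_pt2 {W : Finset (Fin (m + n))} (hW : IsIncSubseq (⇑(directSum p r)) W) :
    IsIncSubseq (⇑r) (pt2 W) := by
  intro i hi j hj hij
  simp only [pt2, Finset.mem_filter] at hi hj
  have := hW _ hi.2 _ hj.2 (na_lt_na.mpr hij)
  rw [ds_natAdd, ds_natAdd] at this
  exact na_lt_na.mp this

lemma inc_union {S : Finset (Fin m)} {T : Finset (Fin n)}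
    (hS : IsIncSubseq (⇑p) S) (hT : IsIncSubseq (⇑r) T) :
    IsIncSubseq (⇑(directSum p r)) (S.map e1 ∪ T.map e2) := by
  intro x hx y hy hxy
  simp only [Finset.mem_union, Finset.mem_map, e1, e2, Function.Embedding.coeFn_mk] at hx hy
  rcases hx with ⟨i, hi, rfl⟩ | ⟨i, hi, rfl⟩ <;> rcases hy with ⟨j, hj, rfl⟩ | ⟨j, hj, rfl⟩
  · rw [ds_castAdd, ds_castAdd]
    exact ca_lt_ca.mpr (hS _ hi _ hj (ca_lt_ca.mp hxy))
  · rw [ds_castAdd, ds_natAdd]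
    exact ca_lt_na _ _
  · exact absurd hxy (not_lt.mpr (le_of_lt (ca_lt_na j i)))
  · rw [ds_natAdd, ds_natAdd]
    exact na_lt_na.mpr (hT _ hi _ hj (na_lt_na.mp hxy))

lemma hasULIS_directSum (hp : HasULIS (⇑p)) (hr : HasULIS (⇑r)) :
    HasULIS (⇑(directSum p r)) := by
  obtain ⟨S, ⟨hSinc, hSmax⟩, hSuniq⟩ := hp
  obtain ⟨T, ⟨hTinc, hTmax⟩, hTuniq⟩ := hr
  refine ⟨S.map e1 ∪ T.map e2, ⟨inc_union p r hSinc hTinc, ?_⟩, ?_⟩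
  · intro W hW
    rw [W_eq W, union_card, union_card]
    exact Nat.add_le_add (hSmax _ (inc_pt1 p r hW)) (hTmax _ (inc_pt2 p r hW))
  · rintro W ⟨hWinc, hWmax⟩
    have h1 : (pt1 W).card ≤ S.card := hSmax _ (inc_pt1 p r hWinc)
    have h2 : (pt2 W).card ≤ T.card := hTmax _ (inc_pt2 p r hWinc)
    have hge : S.card + T.card ≤ W.card := by
      have := hWmax _ (inc_union p r hSinc hTinc)
      rwa [union_card] at this
    have hWcard : W.card = (pt1 W).card + (pt2 W).card := by
      conv_lhs => rw [W_eq W]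
      rw [union_card]
    have e1c : (pt1 W).card = S.card := by omega
    have e2c : (pt2 W).card = T.card := by omega
    have hW1 : pt1 W = S := by
      refine hSuniq _ ⟨inc_pt1 p r hWinc, fun t ht => ?_⟩
      rw [e1c]; exact hSmax _ ht
    have hW2 : pt2 W = T := by
      refine hTuniq _ ⟨inc_pt2 p r hWinc, fun t ht => ?_⟩
      rw [e2c]; exact hTmax _ ht
    rw [W_eq W, hW1, hW2]

variable {k : ℕ} {q : Equiv.Perm (Fin k)}

lemma avoids_directSum (hq : Indecomposable q)
    (hp : Avoids q p) (hr : Avoids q r) : Avoids q (directSum p r) := by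
  rintro ⟨f, hf, hpat⟩
  by_cases hall1 : ∀ a : Fin k, (f a : ℕ) < m
  · refine hp ⟨fun a => ⟨f a, hall1 a⟩, fun a b hab => ?_, ?_⟩
    · rw [Fin.lt_def]; exact hf hab
    · intro a b
      rw [← hpat a b]
      have ha : f a = Fin.castAdd n ⟨f a, hall1 a⟩ := Fin.ext rfl
      have hb : f b = Fin.castAdd n ⟨f b, hall1 b⟩ := Fin.ext rfl
      rw [ha, hb, ds_castAdd, ds_castAdd, ca_lt_ca]
  · push_neg at hall1
    by_cases hall2 : ∀ a : Fin k, m ≤ (f a : ℕ)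
    · have hlt : ∀ a : Fin k, (f a : ℕ) - m < n := fun a => by have := (f a).isLt; omega
      refine hr ⟨fun a => ⟨(f a : ℕ) - m, hlt a⟩, fun a b hab => ?_, ?_⟩
      · have h3 := hf hab
        rw [Fin.lt_def] at h3 ⊢
        have h4 := hall2 a
        simp only
        omega
      · intro a b
        rw [← hpat a b]
        have ha : f a = Fin.natAdd m ⟨(f a : ℕ) - m, hlt a⟩ :=
          Fin.ext (by simp only [Fin.coe_natAdd]; have := hall2 a; omega)
        have hb : f b = Fin.natAdd m ⟨(f b : ℕ) - m, hlt b⟩ :=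
          Fin.ext (by simp only [Fin.coe_natAdd]; have := hall2 b; omega)
        rw [ha, hb, ds_natAdd, ds_natAdd, na_lt_na]
    · push_neg at hall2
      obtain ⟨a₀, ha₀⟩ := hall1
      obtain ⟨c₀, hc₀⟩ := hall2
      classical
      obtain ⟨b₀, hb₀, hb₀min⟩ := Finset.exists_min_image
        (Finset.univ.filter (fun a : Fin k => m ≤ (f a : ℕ))) id
        ⟨a₀, by simp [ha₀]⟩
      simp only [Finset.mem_filter, Finset.mem_univ, true_and, id] at hb₀ hb₀min
      set j : ℕ := (b₀ : ℕ) with hjdef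
      have hhigh : ∀ a : Fin k, j ≤ (a : ℕ) → m ≤ (f a : ℕ) := by
        intro a ha
        have hba : b₀ ≤ a := by rwa [Fin.le_def]
        exact le_trans hb₀ (by rw [← Fin.le_def]; exact hf.monotone hba)
      have hlow : ∀ a : Fin k, (a : ℕ) < j → (f a : ℕ) < m := by
        intro a ha
        by_contra h
        have := hb₀min a (by omega)
        rw [Fin.le_def] at this
        omega
      have hj1 : 1 ≤ j := by
        by_contra h
        have := hhigh c₀ (by omega)
        omega
      refine hq ⟨j, hj1, b₀.isLt, ?_⟩
      intro a b haj hjb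
      rw [← hpat a b]
      have hfa := hlow a haj
      have hfb := hhigh b hjb
      have h1 : f a = Fin.castAdd n ⟨f a, hfa⟩ := Fin.ext rfl
      have hfb2 : (f b : ℕ) - m < n := by have := (f b).isLt; omega
      have h2 : f b = Fin.natAdd m ⟨(f b : ℕ) - m, hfb2⟩ :=
        Fin.ext (by simp only [Fin.coe_natAdd]; omega)
      rw [h1, h2, ds_castAdd, ds_natAdd]
      exact ca_lt_na _ _

end ULISAux

/-- For an indecomposable pattern `q`, `u_m(q)·u_n(q) ≤ u_{m+n}(q)` for all positive
`m, n`; concretely, direct sums of `q`-avoiding permutations with a ULIS are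
`q`-avoiding and have a ULIS. -/



theorem uNum_supermultiplicative {k : ℕ} (q : Equiv.Perm (Fin k))
    (hq : Indecomposable q) :
    (∀ m n : ℕ, 1 ≤ m → 1 ≤ n → uNum q m * uNum q n ≤ uNum q (m + n)) ∧
    (∀ m n : ℕ, ∀ p : Equiv.Perm (Fin m), ∀ r : Equiv.Perm (Fin n),
      Avoids q p → HasULIS ⇑p → Avoids q r → HasULIS ⇑r →
        Avoids q (directSum p r) ∧ HasULIS ⇑(directSum p r)) := by
  have part2 : ∀ m n : ℕ, ∀ p : Equiv.Perm (Fin m), ∀ r : Equiv.Perm (Fin n),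
      Avoids q p → HasULIS ⇑p → Avoids q r → HasULIS ⇑r →
        Avoids q (directSum p r) ∧ HasULIS ⇑(directSum p r) := by
    intro m n p r hpa hpu hra hru
    exact ⟨ULISAux.avoids_directSum p r hq hpa hra, ULISAux.hasULIS_directSum p r hpu hru⟩
  refine ⟨?_, part2⟩
  intro m n hm hn
  rw [uNum, uNum, uNum, ← Nat.card_prod]
  refine Nat.card_le_card_of_injective
    (fun x : {p : Equiv.Perm (Fin m) // Avoids q p ∧ HasULIS ⇑p} ×
             {p : Equiv.Perm (Fin n) // Avoids q p ∧ HasULIS ⇑p} =>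
      (⟨directSum x.1.1 x.2.1,
        part2 m n x.1.1 x.2.1 x.1.2.1 x.1.2.2 x.2.2.1 x.2.2.2⟩ :
        {p : Equiv.Perm (Fin (m + n)) // Avoids q p ∧ HasULIS ⇑p})) ?_
  rintro ⟨⟨p, hp⟩, ⟨r, hr⟩⟩ ⟨⟨p', hp'⟩, ⟨r', hr'⟩⟩ h
  have h' : directSum p r = directSum p' r' := congrArg Subtype.val h
  have hpp : p = p' := by
    ext i
    have h2 := congrArg (fun e : Equiv.Perm (Fin (m + n)) => e (Fin.castAdd n i)) h'
    simp only [ULISAux.ds_castAdd] at h2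
    exact congrArg Fin.val (ULISAux.e1.injective h2)
  have hrr : r = r' := by
    ext j
    have h2 := congrArg (fun e : Equiv.Perm (Fin (m + n)) => e (Fin.natAdd m j)) h'
    simp only [ULISAux.ds_natAdd] at h2
    exact congrArg Fin.val (ULISAux.e2.injective h2)
  simp only [Prod.mk.injEq, Subtype.mk.injEq]
  exact ⟨hpp, hrr⟩
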